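/- Let Z be a measurable function on a probability space (Ω, F, P) with Z ≥ 0 P-a.s. and P(Z > 0) = 1. Let (ξ_k)_{k∈ℕ} be a sequence of P-a.s. nonnegative measurable functions and (x_k)_{k∈ℕ} a sequence of nonnegative reals with lim_{k→∞} x_k = 0 and ∫ Z·ξ_k dP ≤ x_k for every k. If (ξ_k) converges in probability to a nonnegative measurable function ξ, then P(ξ = 0) = 1. -/

import Mathlib

open MeasureTheory Filter

/-- If `Z ≥ 0` a.s. with `P (Z > 0) = 1`, the `ξ k` are a.s. nonnegative with
`∫ Z · ξ k dP ≤ x k` where `x k → 0`, `x k ≥ 0`, and `ξ k → ξ` in probability with `ξ`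
nonnegative, then `P (ξ = 0) = 1`. -/
theorem limit_vanishes_of_deflated_expectations_vanish
    {Ω : Type*} [MeasurableSpace Ω] (P : Measure Ω) [IsProbabilityMeasure P]
    (Z : Ω → ℝ) (hZmeas : Measurable Z) (hZnonneg : ∀ᵐ ω ∂P, 0 ≤ Z ω)
    (hZpos : P {ω | 0 < Z ω} = 1)
    (ξseq : ℕ → Ω → ℝ) (hξseqmeas : ∀ k, Measurable (ξseq k))
    (hξseqnonneg : ∀ k, ∀ᵐ ω ∂P, 0 ≤ ξseq k ω)
    (x : ℕ → ℝ) (hxnonneg : ∀ k, 0 ≤ x k)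
    (hxlim : Tendsto x atTop (nhds 0))
    (hsep : ∀ k, ∫⁻ ω, ENNReal.ofReal (Z ω * ξseq k ω) ∂P ≤ ENNReal.ofReal (x k))
    (ξ : Ω → ℝ) (hξmeas : Measurable ξ) (hξnonneg : ∀ᵐ ω ∂P, 0 ≤ ξ ω)
    (hconv : TendstoInMeasure P ξseq atTop ξ) :
    P {ω | ξ ω = 0} = 1 := by
  have key : ∀ δ c : ℝ, 0 < δ → 0 < c → P {ω | δ ≤ ξ ω ∧ c ≤ Z ω} = 0 := by
    intro δ c hδ hc
    set A := {ω | δ ≤ ξ ω ∧ c ≤ Z ω} with hA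
    have hhalf : 0 < δ / 2 := by linarith
    have hcd : 0 < c * (δ / 2) := by positivity
    have hconv' := tendstoInMeasure_iff_dist.mp hconv (δ / 2) hhalf
    set B : ℕ → Set Ω := fun k => {ω | δ / 2 ≤ dist (ξseq k ω) (ξ ω)} with hB
    have hbound : ∀ k, P A ≤ ENNReal.ofReal (x k) / ENNReal.ofReal (c * (δ / 2)) + P (B k) := by
      intro k
      have hsub : A ⊆ (A ∩ (B k)ᶜ) ∪ B k := by
        intro ω hω
        by_cases h : ω ∈ B k
        · exact Or.inr h
        · exact Or.inl ⟨hω, h⟩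
      have hPS : ENNReal.ofReal (c * (δ / 2)) * P (A ∩ (B k)ᶜ) ≤ ENNReal.ofReal (x k) := by
        calc ENNReal.ofReal (c * (δ / 2)) * P (A ∩ (B k)ᶜ)
            = ∫⁻ _ω in A ∩ (B k)ᶜ, ENNReal.ofReal (c * (δ / 2)) ∂P := by
              rw [setLIntegral_const, mul_comm]
          _ ≤ ∫⁻ ω in A ∩ (B k)ᶜ, ENNReal.ofReal (Z ω * ξseq k ω) ∂P := by
              refine setLIntegral_mono ((hZmeas.mul (hξseqmeas k)).ennreal_ofReal) ?_
              intro ω hω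
              obtain ⟨⟨hξω, hZω⟩, hBω⟩ := hω
              have hdist : dist (ξseq k ω) (ξ ω) < δ / 2 := lt_of_not_ge hBω
              have : ξ ω - ξseq k ω ≤ |ξseq k ω - ξ ω| := by
                rw [abs_sub_comm]; exact le_abs_self _
              have hξk : δ / 2 ≤ ξseq k ω := by
                rw [Real.dist_eq] at hdist
                linarith [abs_lt.mp hdist]
              exact ENNReal.ofReal_le_ofReal
                (mul_le_mul hZω hξk (le_of_lt hhalf) (hc.le.trans hZω))
          _ ≤ ∫⁻ ω, ENNReal.ofReal (Z ω * ξseq k ω) ∂P := setLIntegral_le_lintegral _ _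
          _ ≤ ENNReal.ofReal (x k) := hsep k
      have hPS' : P (A ∩ (B k)ᶜ) ≤ ENNReal.ofReal (x k) / ENNReal.ofReal (c * (δ / 2)) := by
        rw [ENNReal.le_div_iff_mul_le (Or.inl (ENNReal.ofReal_pos.mpr hcd).ne')
          (Or.inl ENNReal.ofReal_ne_top)]
        rw [mul_comm]; exact hPS
      calc P A ≤ P ((A ∩ (B k)ᶜ) ∪ B k) := measure_mono hsub
        _ ≤ P (A ∩ (B k)ᶜ) + P (B k) := measure_union_le _ _
        _ ≤ ENNReal.ofReal (x k) / ENNReal.ofReal (c * (δ / 2)) + P (B k) :=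
            add_le_add_left hPS' _
    have h1 : Tendsto (fun k => ENNReal.ofReal (x k) / ENNReal.ofReal (c * (δ / 2)))
        atTop (nhds 0) := by
      have h0 : Tendsto (fun k => ENNReal.ofReal (x k)) atTop (nhds 0) := by
        have := (ENNReal.continuous_ofReal.tendsto 0).comp hxlim
        rwa [ENNReal.ofReal_zero] at this
      have := ENNReal.Tendsto.mul_const (b := (ENNReal.ofReal (c * (δ / 2)))⁻¹) h0
        (Or.inr (ENNReal.inv_ne_top.mpr (ENNReal.ofReal_pos.mpr hcd).ne'))
      simpa [div_eq_mul_inv] using this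
    have htend : Tendsto (fun k => ENNReal.ofReal (x k) / ENNReal.ofReal (c * (δ / 2)) + P (B k))
        atTop (nhds 0) := by
      have := h1.add hconv'
      simpa using this
    have : P A ≤ 0 := ge_of_tendsto' htend hbound
    exact le_antisymm this zero_le
  -- the union of bad sets is null
  set U : Set Ω := ⋃ (n : ℕ) (m : ℕ),
      {ω | 1 / ((n : ℝ) + 1) ≤ ξ ω ∧ 1 / ((m : ℝ) + 1) ≤ Z ω} with hU
  have hUnull : P U = 0 := by
    refine measure_iUnion_null fun n => measure_iUnion_null fun m => ?_
    exact key _ _ (by positivity) (by positivity)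
  have hUnmem : ∀ᵐ ω ∂P, ω ∉ U := measure_eq_zero_iff_ae_notMem.mp hUnull
  have hZae : ∀ᵐ ω ∂P, 0 < Z ω := by
    have hm : MeasurableSet {ω | 0 < Z ω} := measurableSet_lt measurable_const hZmeas
    have hc : P {ω | 0 < Z ω}ᶜ = 0 := by
      rw [measure_compl hm (measure_ne_top _ _), hZpos, measure_univ, tsub_self]
    rw [ae_iff]
    simpa [Set.compl_setOf] using hc
  have hfin : ∀ᵐ ω ∂P, ξ ω = 0 := by
    filter_upwards [hξnonneg, hZae, hUnmem] with ω h1 h2 h3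
    by_contra hne
    have hpos : 0 < ξ ω := lt_of_le_of_ne h1 (Ne.symm hne)
    obtain ⟨n, hn⟩ := exists_nat_one_div_lt hpos
    obtain ⟨m, hm⟩ := exists_nat_one_div_lt h2
    exact h3 (Set.mem_iUnion.2 ⟨n, Set.mem_iUnion.2 ⟨m, ⟨hn.le, hm.le⟩⟩⟩)
  have hmeas0 : MeasurableSet {ω | ξ ω = 0} := hξmeas (measurableSet_singleton 0)
  rw [← prob_compl_eq_zero_iff hmeas0]
  rw [ae_iff] at hfin
  simpa [Set.compl_setOf] using hfin
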